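/- Let f(t) = Σ_{k=0}^d c_k G_k^{(n)}(t) be a real polynomial that is a nonnegative linear combination of normalized Gegenbauer polynomials for S^{n−1} (all c_k ≥ 0, c_0 > 0), and suppose f(t) ≤ 0 for all t ∈ [−1, cos ψ]. Then any set of points ξ_1, …, ξ_N on S^{n−1} with pairwise inner products ⟨ξ_i, ξ_j⟩ ≤ cos ψ for i ≠ j satisfies N ≤ f(1)/c_0 (the Delsarte–Goethals–Seidel linear programming bound). -/

import Mathlib

open Matrix Finset

noncomputable section

/-- The normalized Gegenbauer polynomial `G_k^{(n)}` for the sphere `S^{n-1}`,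
defined by the standard three-term recurrence, with `G_k^{(n)}(1) = 1`. -/
def gegenbauer (n : ℕ) : ℕ → ℝ → ℝ
  | 0, _ => 1
  | 1, t => t
  | (k + 2), t =>
      ((2 * ((k : ℝ) + 2) + n - 4) * t * gegenbauer n (k + 1) t
        - ((k : ℝ) + 1) * gegenbauer n k t) / (((k : ℝ) + 2) + n - 3)

namespace DGS
open MvPolynomial
variable {n : ℕ}

abbrev P (n : ℕ) := MvPolynomial (Fin n) ℝ

/-- product of factorials of the exponents -/
def mfact (m : Fin n →₀ ℕ) : ℝ := ∏ i, ((m i).factorial : ℝ)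

lemma mfact_pos (m : Fin n →₀ ℕ) : 0 < mfact m :=
  Finset.prod_pos fun i _ => by positivity

def fischer (p q : P n) : ℝ := ∑ m ∈ p.support, coeff m p * coeff m q * mfact m

lemma fischer_subset {p q : P n} {s : Finset (Fin n →₀ ℕ)} (h : p.support ⊆ s) :
    fischer p q = ∑ m ∈ s, coeff m p * coeff m q * mfact m :=
  Finset.sum_subset h (fun m _ hm => by
    rw [MvPolynomial.notMem_support_iff] at hm; simp [hm])

lemma fischer_zero_left (q : P n) : fischer 0 q = 0 := by simp [fischer]

lemma fischer_add_left (p p' q : P n) :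
    fischer (p + p') q = fischer p q + fischer p' q := by
  rw [fischer_subset (s := p.support ∪ p'.support) (MvPolynomial.support_add),
    fischer_subset (s := p.support ∪ p'.support) Finset.subset_union_left,
    fischer_subset (s := p.support ∪ p'.support) Finset.subset_union_right,
    ← Finset.sum_add_distrib]
  exact Finset.sum_congr rfl fun m _ => by rw [coeff_add]; ring

lemma fischer_smul_left (a : ℝ) (p q : P n) :
    fischer (a • p) q = a * fischer p q := by
  rw [fischer_subset (s := p.support) (MvPolynomial.support_smul),
    fischer, Finset.mul_sum]
  exact Finset.sum_congr rfl fun m _ => by rw [MvPolynomial.coeff_smul, smul_eq_mul]; ring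

lemma fischer_sum_left {ι : Type*} (s : Finset ι) (f : ι → P n) (q : P n) :
    fischer (∑ i ∈ s, f i) q = ∑ i ∈ s, fischer (f i) q := by
  induction s using Finset.cons_induction with
  | empty => simp [fischer_zero_left]
  | cons i s hi ih => rw [Finset.sum_cons, Finset.sum_cons, fischer_add_left, ih]

lemma fischer_add_right (p q q' : P n) :
    fischer p (q + q') = fischer p q + fischer p q' := by
  unfold fischer
  rw [← Finset.sum_add_distrib]
  exact Finset.sum_congr rfl fun m _ => by rw [coeff_add]; ring

lemma fischer_smul_right (a : ℝ) (p q : P n) :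
    fischer p (a • q) = a * fischer p q := by
  unfold fischer
  rw [Finset.mul_sum]
  exact Finset.sum_congr rfl fun m _ => by rw [MvPolynomial.coeff_smul, smul_eq_mul]; ring

lemma fischer_sum_right {ι : Type*} (s : Finset ι) (p : P n) (f : ι → P n) :
    fischer p (∑ i ∈ s, f i) = ∑ i ∈ s, fischer p (f i) := by
  unfold fischer
  rw [Finset.sum_comm]
  exact Finset.sum_congr rfl fun m _ => by
    rw [MvPolynomial.coeff_sum, Finset.mul_sum, Finset.sum_mul]

lemma fischer_self_nonneg (p : P n) : 0 ≤ fischer p p :=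
  Finset.sum_nonneg fun m _ => by
    have := mfact_pos (n := n) m; nlinarith [sq_nonneg (coeff m p)]


lemma fischer_monomial_monomial (u v : Fin n →₀ ℕ) (a b : ℝ) :
    fischer (monomial u a) (monomial v b) = if u = v then a * b * mfact u else 0 := by
  unfold fischer
  by_cases ha : a = 0
  · simp [ha]
  · rw [MvPolynomial.support_monomial, if_neg ha, Finset.sum_singleton,
      MvPolynomial.coeff_monomial, MvPolynomial.coeff_monomial, if_pos rfl]
    by_cases h : u = v
    · rw [if_pos h.symm, if_pos h]
    · rw [if_neg (fun hh => h hh.symm), if_neg h]; ring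

lemma mfact_sub_single {u : Fin n →₀ ℕ} {i : Fin n} (h : u i ≠ 0) :
    ((u i : ℝ)) * mfact (u - Finsupp.single i 1) = mfact u := by
  unfold mfact
  rw [← Finset.mul_prod_erase Finset.univ _ (Finset.mem_univ i),
    ← Finset.mul_prod_erase Finset.univ (fun j => ((u j).factorial : ℝ)) (Finset.mem_univ i)]
  have h1 : ∀ j ∈ Finset.univ.erase i, (((u - Finsupp.single i 1 : Fin n →₀ ℕ) j).factorial : ℝ)
      = ((u j).factorial : ℝ) := by
    intro j hj
    have hji : j ≠ i := Finset.ne_of_mem_erase hj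
    rw [Finsupp.tsub_apply, Finsupp.single_eq_of_ne' (Ne.symm hji)]
    simp
  rw [Finset.prod_congr rfl h1, ← mul_assoc]
  congr 1
  have h2 : (u - Finsupp.single i 1 : Fin n →₀ ℕ) i = u i - 1 := by
    rw [Finsupp.tsub_apply, Finsupp.single_eq_same]
  rw [h2, ← Nat.cast_mul, Nat.mul_factorial_pred h]

lemma sub_single_eq_iff {u v : Fin n →₀ ℕ} {i : Fin n} (h : u i ≠ 0) :
    u - Finsupp.single i 1 = v ↔ u = Finsupp.single i 1 + v := by
  constructor <;> intro hh
  · ext j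
    have hj := DFunLike.congr_fun hh j
    simp only [Finsupp.tsub_apply] at hj
    simp only [Finsupp.add_apply]
    by_cases hji : j = i
    · subst hji; simp only [Finsupp.single_eq_same] at hj ⊢; omega
    · simp only [Finsupp.single_eq_of_ne' fun hx : i = j => hji hx.symm] at hj ⊢; omega
  · subst hh; ext j
    simp only [Finsupp.tsub_apply, Finsupp.add_apply]
    omega


lemma fischer_X_mul_right (i : Fin n) (p q : P n) :
    fischer p (X i * q) = fischer (pderiv i p) q := by
  induction p using MvPolynomial.induction_on' with
  | add p1 p2 h1 h2 => rw [fischer_add_left, map_add, fischer_add_left, h1, h2]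
  | monomial u a =>
    induction q using MvPolynomial.induction_on' with
    | add q1 q2 g1 g2 => rw [mul_add, fischer_add_right, fischer_add_right, g1, g2]
    | monomial v b =>
      rw [pderiv_monomial]
      have hX : (X i : P n) * monomial v b = monomial (Finsupp.single i 1 + v) b := by
        rw [X, monomial_mul, one_mul]
      rw [hX, fischer_monomial_monomial, fischer_monomial_monomial]
      by_cases hui : u i = 0
      · have h1 : u ≠ Finsupp.single i 1 + v := by
          intro h
          have h2 := DFunLike.congr_fun h i
          simp only [Finsupp.add_apply, Finsupp.single_eq_same] at h2
          omega
        rw [if_neg h1]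
        split_ifs <;> simp [hui]
      · simp only [sub_single_eq_iff hui]
        split_ifs with h
        · rw [← mfact_sub_single hui]; ring
        · rfl

def lin (x : EuclideanSpace ℝ (Fin n)) : P n := ∑ i, C (x i) * X i
def rad (n : ℕ) : P n := ∑ i, X i ^ 2
def dirD (x : EuclideanSpace ℝ (Fin n)) (p : P n) : P n := ∑ i, C (x i) * pderiv i p
def lap (p : P n) : P n := ∑ i, pderiv i (pderiv i p)
def eulerOp (p : P n) : P n := ∑ i, X i * pderiv i p

lemma fischer_lin_mul_right (x : EuclideanSpace ℝ (Fin n)) (p q : P n) :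
    fischer p (lin x * q) = fischer (dirD x p) q := by
  rw [lin, Finset.sum_mul, fischer_sum_right, dirD, fischer_sum_left]
  refine Finset.sum_congr rfl fun i _ => ?_
  rw [mul_assoc, C_mul', fischer_smul_right, fischer_X_mul_right, ← fischer_smul_left, ← C_mul']

lemma fischer_rad_mul_right (p q : P n) :
    fischer p (rad n * q) = fischer (lap p) q := by
  rw [rad, Finset.sum_mul, fischer_sum_right, lap, fischer_sum_left]
  refine Finset.sum_congr rfl fun i _ => ?_
  rw [sq, mul_assoc, fischer_X_mul_right, fischer_X_mul_right]

lemma degree_eq_sum_univ (m : Fin n →₀ ℕ) : Finsupp.degree m = ∑ i, m i :=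
  Finset.sum_subset (Finset.subset_univ _)
    (fun i _ hi => by rwa [Finsupp.notMem_support_iff] at hi)

lemma eulerOp_monomial (m : Fin n →₀ ℕ) (a : ℝ) :
    eulerOp (monomial m a : P n) = ((Finsupp.degree m : ℕ) : ℝ) • monomial m a := by
  unfold eulerOp
  have key : ∀ i : Fin n, (X i : P n) * pderiv i (monomial m a) = monomial m (a * m i) := by
    intro i
    rw [pderiv_monomial]
    by_cases hmi : m i = 0
    · rw [hmi]; simp
    · rw [X, monomial_mul, one_mul]
      have hm : Finsupp.single i 1 + (m - Finsupp.single i 1) = m := by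
        ext j
        simp only [Finsupp.add_apply, Finsupp.tsub_apply, Finsupp.single_apply]
        split_ifs with h
        · subst h; omega
        · omega
      rw [hm]
  rw [Finset.sum_congr rfl fun i _ => key i]
  rw [← map_sum (monomial m) (fun i => a * (m i : ℝ)) Finset.univ]
  rw [smul_monomial]
  congr 1
  rw [smul_eq_mul, ← Finset.mul_sum, degree_eq_sum_univ]
  push_cast
  ring

lemma eulerOp_add (p q : P n) : eulerOp (p + q) = eulerOp p + eulerOp q := by
  unfold eulerOp
  rw [← Finset.sum_add_distrib]
  exact Finset.sum_congr rfl fun i _ => by rw [map_add, mul_add]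

lemma eulerOp_zero : eulerOp (0 : P n) = 0 := by
  unfold eulerOp; simp

lemma eulerOp_sum {ι : Type*} (s : Finset ι) (f : ι → P n) :
    eulerOp (∑ i ∈ s, f i) = ∑ i ∈ s, eulerOp (f i) := by
  induction s using Finset.cons_induction with
  | empty => simp [eulerOp_zero]
  | cons i s hi ih => rw [Finset.sum_cons, Finset.sum_cons, eulerOp_add, ih]

lemma euler {k : ℕ} {p : P n} (hp : p.IsHomogeneous k) : eulerOp p = (k : ℝ) • p := by
  conv_lhs => rw [p.as_sum]
  rw [eulerOp_sum]
  have key : ∀ m ∈ p.support, eulerOp (monomial m (coeff m p) : P n)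
      = (k : ℝ) • monomial m (coeff m p) := by
    intro m hm
    rw [eulerOp_monomial]
    have hdm : Finsupp.degree m = k :=
      by_contra fun h => (mem_support_iff.mp hm) (hp.coeff_eq_zero h)
    rw [hdm]
  rw [Finset.sum_congr rfl key, ← Finset.smul_sum, ← p.as_sum]

lemma pderiv_isHomogeneous {p : P n} {k : ℕ} (hp : p.IsHomogeneous (k + 1)) (i : Fin n) :
    (pderiv i p).IsHomogeneous k := by
  have hrep : pderiv i p
      = ∑ m ∈ p.support, monomial (m - Finsupp.single i 1) (coeff m p * m i) := by
    conv_lhs => rw [p.as_sum]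
    rw [map_sum]
    exact Finset.sum_congr rfl fun m _ => pderiv_monomial
  rw [hrep]
  apply IsHomogeneous.sum
  intro m hm
  by_cases hmi : m i = 0
  · have h0 : (coeff m p * (m i : ℝ)) = 0 := by rw [hmi]; simp
    rw [h0, map_zero]
    exact isHomogeneous_zero _ _ _
  · apply isHomogeneous_monomial
    have hdm : Finsupp.degree m = k + 1 :=
      by_contra fun h => (mem_support_iff.mp hm) (hp.coeff_eq_zero h)
    have hsplit : ∀ f : Fin n → ℕ,
        ∑ j, f j = f i + ∑ j ∈ Finset.univ.erase i, f j :=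
      fun f => (Finset.add_sum_erase _ f (Finset.mem_univ i)).symm
    have hco : ∀ j ∈ Finset.univ.erase i,
        ((m - Finsupp.single i 1 : Fin n →₀ ℕ)) j = m j := by
      intro j hj
      rw [Finsupp.tsub_apply, Finsupp.single_eq_of_ne' (Ne.symm (Finset.ne_of_mem_erase hj))]
      simp
    rw [degree_eq_sum_univ, hsplit] at hdm
    rw [degree_eq_sum_univ, hsplit, Finset.sum_congr rfl hco,
      Finsupp.tsub_apply, Finsupp.single_eq_same]
    change m i - 1 + ∑ j ∈ Finset.univ.erase i, m j = k
    omega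

lemma fischer_one_right (p : P n) : fischer p 1 = coeff 0 p := by
  unfold fischer
  rw [Finset.sum_eq_single 0]
  · rw [MvPolynomial.coeff_zero_one]
    simp [mfact]
  · intro m _ hm
    rw [MvPolynomial.coeff_one, if_neg fun h => hm h.symm]
    ring
  · intro h
    rw [notMem_support_iff] at h
    rw [h]; ring

lemma eval_homog_zero {p : P n} (hp : p.IsHomogeneous 0) (y : Fin n → ℝ) :
    eval y p = coeff 0 p := by
  have hsub : p.support ⊆ {0} := by
    intro m hm
    have hdm : Finsupp.degree m = 0 :=
      by_contra fun h => (mem_support_iff.mp hm) (hp.coeff_eq_zero h)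
    rw [Finsupp.degree_eq_zero_iff] at hdm
    simp [hdm]
  rw [eval_eq, Finset.sum_subset hsub (fun m _ hm => by
    rw [notMem_support_iff] at hm; rw [hm]; ring)]
  simp

lemma fischer_lin_pow : ∀ (k : ℕ) (p : P n), p.IsHomogeneous k →
    ∀ y : EuclideanSpace ℝ (Fin n), fischer p (lin y ^ k) = (k.factorial : ℝ) * eval (fun i => y i) p := by
  intro k
  induction k with
  | zero =>
    intro p hp y
    rw [pow_zero, fischer_one_right, eval_homog_zero hp]
    simp
  | succ k ih =>
    intro p hp y
    rw [pow_succ', fischer_lin_mul_right]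
    have hd : (dirD y p).IsHomogeneous k :=
      IsHomogeneous.sum _ _ _ fun i _ => (pderiv_isHomogeneous hp i).C_mul _
    rw [ih _ hd y]
    have h3 : eval (fun i => y i) (eulerOp p) = eval (fun i => y i) (dirD y p) := by
      unfold eulerOp dirD
      rw [map_sum, map_sum]
      exact Finset.sum_congr rfl fun i _ => by rw [eval_mul, eval_mul, eval_X, eval_C]
    have h2 := congrArg (eval (fun i => y i)) (euler hp)
    rw [smul_eval, h3] at h2
    rw [h2, Nat.factorial_succ]
    push_cast
    ring

lemma pderiv_lin (x : EuclideanSpace ℝ (Fin n)) (i : Fin n) :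
    pderiv i (lin x) = C (x i) := by
  unfold lin
  rw [map_sum, Finset.sum_eq_single i]
  · rw [pderiv_C_mul, pderiv_X_self, mul_one]
  · intro j _ hj
    rw [pderiv_C_mul, pderiv_X_of_ne hj, mul_zero]
  · intro h; exact absurd (Finset.mem_univ i) h

lemma pderiv_rad (i : Fin n) : pderiv i (rad n) = (2 : ℝ) • X i := by
  unfold rad
  rw [map_sum, Finset.sum_eq_single i]
  · rw [pderiv_pow, pderiv_X_self, mul_one, pow_one]
    push_cast
    rw [two_mul, two_smul]
  · intro j _ hj
    rw [pderiv_pow, pderiv_X_of_ne hj, mul_zero]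
  · intro h; exact absurd (Finset.mem_univ i) h

lemma dirD_smul (x : EuclideanSpace ℝ (Fin n)) (a : ℝ) (p : P n) :
    dirD x (a • p) = a • dirD x p := by
  unfold dirD
  rw [Finset.smul_sum]
  exact Finset.sum_congr rfl fun i _ => by rw [Derivation.map_smul, mul_smul_comm]

lemma dirD_sub (x : EuclideanSpace ℝ (Fin n)) (p q : P n) :
    dirD x (p - q) = dirD x p - dirD x q := by
  unfold dirD
  rw [← Finset.sum_sub_distrib]
  exact Finset.sum_congr rfl fun i _ => by rw [map_sub, mul_sub]

lemma dirD_mul (x : EuclideanSpace ℝ (Fin n)) (p q : P n) :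
    dirD x (p * q) = dirD x p * q + p * dirD x q := by
  unfold dirD
  rw [Finset.sum_mul, Finset.mul_sum, ← Finset.sum_add_distrib]
  refine Finset.sum_congr rfl fun i _ => ?_
  rw [pderiv_mul]
  ring

lemma sum_sq_of_norm_one {x : EuclideanSpace ℝ (Fin n)} (hx : ‖x‖ = 1) :
    ∑ i, x i ^ 2 = 1 := by
  rw [EuclideanSpace.norm_eq] at hx
  have h0 : 0 ≤ ∑ i, ‖x i‖ ^ 2 := Finset.sum_nonneg fun i _ => sq_nonneg _
  have h1 : ∑ i, ‖x i‖ ^ 2 = 1 := by nlinarith [Real.sq_sqrt h0]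
  simpa [Real.norm_eq_abs, sq_abs] using h1

lemma dirD_lin_self {x : EuclideanSpace ℝ (Fin n)} (hx : ‖x‖ = 1) :
    dirD x (lin x) = 1 := by
  unfold dirD
  have h : ∀ i ∈ Finset.univ, C (x i) * pderiv i (lin x) = (C (x i ^ 2) : P n) := by
    intro i _
    rw [pderiv_lin, ← _root_.map_mul, sq]
  rw [Finset.sum_congr rfl h, ← map_sum, sum_sq_of_norm_one hx, _root_.map_one]

lemma dirD_rad (x : EuclideanSpace ℝ (Fin n)) :
    dirD x (rad n) = (2 : ℝ) • lin x := by
  unfold dirD lin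
  rw [Finset.smul_sum]
  refine Finset.sum_congr rfl fun i _ => ?_
  rw [pderiv_rad, mul_smul_comm]

lemma lap_smul (a : ℝ) (p : P n) : lap (a • p) = a • lap p := by
  unfold lap
  rw [Finset.smul_sum]
  exact Finset.sum_congr rfl fun i _ => by rw [Derivation.map_smul, Derivation.map_smul]

lemma lap_sub (p q : P n) : lap (p - q) = lap p - lap q := by
  unfold lap
  rw [← Finset.sum_sub_distrib]
  exact Finset.sum_congr rfl fun i _ => by rw [map_sub, map_sub]

lemma lap_sum {ι : Type*} (s : Finset ι) (f : ι → P n) :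
    lap (∑ i ∈ s, f i) = ∑ i ∈ s, lap (f i) := by
  unfold lap
  rw [Finset.sum_comm]
  exact Finset.sum_congr rfl fun i _ => by rw [map_sum, map_sum]

lemma lap_one : lap (1 : P n) = 0 := by
  unfold lap; simp

lemma lap_lin (x : EuclideanSpace ℝ (Fin n)) : lap (lin x) = 0 := by
  unfold lap
  refine Finset.sum_eq_zero fun i _ => ?_
  rw [pderiv_lin, pderiv_C]

lemma lap_lin_mul (x : EuclideanSpace ℝ (Fin n)) (q : P n) :
    lap (lin x * q) = (2 : ℝ) • dirD x q + lin x * lap q := by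
  have key : ∀ i : Fin n, pderiv i (pderiv i (lin x * q))
      = (2 : ℝ) • (C (x i) * pderiv i q) + lin x * pderiv i (pderiv i q) := by
    intro i
    rw [pderiv_mul, pderiv_lin, map_add, pderiv_C_mul, pderiv_mul, pderiv_lin]
    rw [two_smul]
    ring
  unfold lap
  rw [Finset.sum_congr rfl fun i _ => key i, Finset.sum_add_distrib, ← Finset.smul_sum,
    ← Finset.mul_sum]
  rfl

lemma lap_rad_mul {k : ℕ} (q : P n) (hq : q.IsHomogeneous k) :
    lap (rad n * q) = ((2 * n + 4 * k : ℝ)) • q + rad n * lap q := by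
  have key : ∀ i : Fin n, pderiv i (pderiv i (rad n * q))
      = ((2 : ℝ) • q + (4 : ℝ) • (X i * pderiv i q)) + rad n * pderiv i (pderiv i q) := by
    intro i
    rw [pderiv_mul, pderiv_rad, map_add, smul_mul_assoc, Derivation.map_smul, pderiv_mul,
      pderiv_X_self, pderiv_mul, pderiv_rad]
    simp only [smul_mul_assoc, one_mul, mul_smul_comm]
    module
  unfold lap
  rw [Finset.sum_congr rfl fun i _ => key i, Finset.sum_add_distrib, Finset.sum_add_distrib,
    ← Finset.smul_sum, ← Finset.smul_sum, ← Finset.mul_sum,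
    Finset.sum_const, Finset.card_univ, Fintype.card_fin]
  have he : (∑ i, (X i * pderiv i q)) = eulerOp q := rfl
  rw [he, euler hq, ← Nat.cast_smul_eq_nsmul ℝ n q]
  match_scalars <;> (push_cast; ring)

def Z (x : EuclideanSpace ℝ (Fin n)) : ℕ → P n
  | 0 => 1
  | 1 => lin x
  | (k + 2) =>
      ((((k : ℝ) + 2) + n - 3)⁻¹) •
        ((2 * ((k : ℝ) + 2) + (n : ℝ) - 4) • (lin x * Z x (k + 1))
          - ((k : ℝ) + 1) • (rad n * Z x k))

lemma denom_pos (hn : 2 ≤ n) (k : ℕ) : (0:ℝ) < ((k : ℝ) + 2) + n - 3 := by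
  have h2 : (2:ℝ) ≤ n := by exact_mod_cast hn
  have h0 : (0:ℝ) ≤ k := Nat.cast_nonneg k
  linarith

lemma Z_two_eq (x : EuclideanSpace ℝ (Fin n)) (k : ℕ) :
    Z x (k + 2) = ((((k : ℝ) + 2) + n - 3)⁻¹) •
        ((2 * ((k : ℝ) + 2) + (n : ℝ) - 4) • (lin x * Z x (k + 1))
          - ((k : ℝ) + 1) • (rad n * Z x k)) := rfl

lemma Z_rec (hn : 2 ≤ n) (x : EuclideanSpace ℝ (Fin n)) (k : ℕ) :
    (((k : ℝ) + 2) + (n : ℝ) - 3) • Z x (k + 2)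
      = (2 * ((k : ℝ) + 2) + (n : ℝ) - 4) • (lin x * Z x (k + 1))
        - ((k : ℝ) + 1) • (rad n * Z x k) := by
  rw [Z_two_eq, smul_smul, mul_inv_cancel₀ (ne_of_gt (denom_pos hn k)), one_smul]

lemma IsHomogeneous.smul' {φ : P n} {m : ℕ} (a : ℝ) (h : φ.IsHomogeneous m) :
    (a • φ).IsHomogeneous m := by
  rw [← C_mul']; exact h.C_mul a

lemma lin_isHomogeneous (x : EuclideanSpace ℝ (Fin n)) : (lin x).IsHomogeneous 1 :=
  IsHomogeneous.sum _ _ _ fun i _ => (isHomogeneous_X ℝ i).C_mul (x i)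

lemma rad_isHomogeneous : (rad n).IsHomogeneous 2 :=
  IsHomogeneous.sum _ _ _ fun i _ => by
    rw [sq]
    exact (isHomogeneous_X ℝ i).mul (isHomogeneous_X ℝ i)

lemma Z_isHomogeneous (x : EuclideanSpace ℝ (Fin n)) : ∀ k, (Z x k).IsHomogeneous k := by
  refine Nat.twoStepInduction ?_ ?_ ?_
  · exact isHomogeneous_one _ _
  · exact lin_isHomogeneous x
  · intro k ih1 ih2
    rw [Z_two_eq]
    refine IsHomogeneous.smul' _ (IsHomogeneous.sub (IsHomogeneous.smul' _ ?_)
      (IsHomogeneous.smul' _ ?_))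
    · have h := (lin_isHomogeneous x).mul ih2
      rwa [show 1 + (k + 1) = k + 2 by omega] at h
    · have h := rad_isHomogeneous.mul ih1
      rwa [show 2 + k = k + 2 by omega] at h

lemma eval_rad {y : EuclideanSpace ℝ (Fin n)} (hy : ‖y‖ = 1) :
    eval (fun i => y i) (rad n) = 1 := by
  unfold rad
  rw [map_sum]
  simpa using sum_sq_of_norm_one hy

lemma eval_lin (x y : EuclideanSpace ℝ (Fin n)) :
    eval (fun i => y i) (lin x) = ∑ i, x i * y i := by
  unfold lin
  rw [map_sum]
  simp

lemma Z_eval (hn : 2 ≤ n) (x y : EuclideanSpace ℝ (Fin n)) (hy : ‖y‖ = 1) :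
    ∀ k, eval (fun i => y i) (Z x k) = gegenbauer n k (∑ i, x i * y i) := by
  refine Nat.twoStepInduction ?_ ?_ ?_
  · show eval _ (1 : P n) = _
    rw [_root_.map_one]; rfl
  · show eval _ (lin x) = _
    rw [eval_lin]; rfl
  · intro k ih1 ih2
    rw [Z_two_eq, smul_eval, map_sub, smul_eval, smul_eval, eval_mul, eval_mul, eval_rad hy,
      eval_lin, ih1, ih2]
    show _ = gegenbauer n (k + 2) _
    rw [show gegenbauer n (k + 2) (∑ i, x i * y i)
        = ((2 * ((k : ℝ) + 2) + n - 4) * (∑ i, x i * y i) * gegenbauer n (k + 1) (∑ i, x i * y i)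
          - ((k : ℝ) + 1) * gegenbauer n k (∑ i, x i * y i)) / (((k : ℝ) + 2) + n - 3) from rfl]
    rw [div_eq_inv_mul]
    ring

lemma dirD_one (x : EuclideanSpace ℝ (Fin n)) : dirD x (1 : P n) = 0 := by
  unfold dirD
  simp [pderiv_one]

lemma dirD_Z (hn : 2 ≤ n) {x : EuclideanSpace ℝ (Fin n)} (hx : ‖x‖ = 1) :
    ∀ k, dirD x (Z x (k + 1)) = ((k : ℝ) + 1) • Z x k := by
  refine Nat.twoStepInduction ?_ ?_ ?_
  · rw [show Z x (0 + 1) = lin x from rfl, dirD_lin_self hx,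
      show Z x 0 = (1 : P n) from rfl]
    norm_num
  · show dirD x (Z x (0 + 2)) = _
    have hn2 : (2:ℝ) ≤ (n:ℝ) := by exact_mod_cast hn
    have hne : ((n:ℝ) - 1) ≠ 0 := by intro h; linarith [h]
    rw [Z_two_eq]
    rw [show Z x (0 + 1) = lin x from rfl, show Z x 0 = (1 : P n) from rfl]
    rw [dirD_smul, dirD_sub, dirD_smul, dirD_smul, dirD_mul, dirD_mul,
      dirD_lin_self hx, dirD_rad, dirD_one]
    simp only [mul_zero, mul_one, one_mul, add_zero, smul_mul_assoc, Nat.cast_one,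
      Nat.cast_zero, Nat.cast_ofNat]
    match_scalars
    rw [show (0:ℝ) + 2 + (n:ℝ) - 3 = (n:ℝ) - 1 from by ring, inv_mul_eq_div, div_eq_iff hne]
    ring
  · intro k ih1 ih2
    have hne : (((k:ℝ) + 2) + (n : ℝ) - 3) ≠ 0 := ne_of_gt (denom_pos hn k)
    have hne2 : ((((k+1:ℕ):ℝ) + 2) + (n : ℝ) - 3) ≠ 0 := ne_of_gt (denom_pos hn (k+1))
    have h := Z_rec hn x k
    have hkey : ((k : ℝ) + 1) • (rad n * Z x k)
        = (2 * ((k : ℝ) + 2) + (n : ℝ) - 4) • (lin x * Z x (k + 1))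
          - (((k : ℝ) + 2) + (n : ℝ) - 3) • Z x (k + 2) := by
      rw [eq_sub_iff_add_eq] at h ⊢
      rw [add_comm]
      exact h
    show dirD x (Z x ((k + 1) + 2)) = _
    rw [Z_two_eq, dirD_smul, dirD_sub, dirD_smul, dirD_smul, dirD_mul, dirD_mul,
      dirD_lin_self hx, dirD_rad, ih2, ih1]
    have hn2 : (2:ℝ) ≤ (n:ℝ) := by exact_mod_cast hn
    have hkn : ((k:ℝ) + (n:ℝ)) ≠ 0 := by positivity
    simp only [mul_smul_comm, smul_mul_assoc, one_mul]
    rw [hkey]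
    match_scalars <;>
      rw [show (k:ℝ) + 1 + 2 + (n:ℝ) - 3 = (k:ℝ) + (n:ℝ) from by ring, inv_mul_eq_div,
        div_eq_iff hkn] <;>
      ring

lemma lap_Z (hn : 2 ≤ n) {x : EuclideanSpace ℝ (Fin n)} (hx : ‖x‖ = 1) :
    ∀ k, lap (Z x k) = 0 := by
  refine Nat.twoStepInduction ?_ ?_ ?_
  · exact lap_one
  · exact lap_lin x
  · intro k ih1 ih2
    rw [Z_two_eq, lap_smul, lap_sub, lap_smul, lap_smul, lap_lin_mul,
      lap_rad_mul (Z x k) (Z_isHomogeneous x k), ih1, ih2, dirD_Z hn hx k]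
    simp only [mul_zero, add_zero, smul_smul]
    match_scalars <;> (push_cast; ring)

def acoef (n : ℕ) : ℕ → ℝ
  | 0 => 1
  | (j+1) => (((j:ℝ) + 1) + n - 2) / (2 * ((j:ℝ) + 1) + n - 2)

def bcoef (n : ℕ) : ℕ → ℝ
  | 0 => 0
  | (j+1) => ((j:ℝ) + 1) / (2 * ((j:ℝ) + 1) + n - 2)

lemma acoef_pos (hn : 2 ≤ n) : ∀ j, 0 < acoef n j := by
  intro j
  have hn2 : (2:ℝ) ≤ (n:ℝ) := by exact_mod_cast hn
  cases j with
  | zero => norm_num [acoef]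
  | succ j =>
    have h0 : (0:ℝ) ≤ j := Nat.cast_nonneg j
    unfold acoef
    apply div_pos <;> linarith

lemma bcoef_nonneg (hn : 2 ≤ n) : ∀ j, 0 ≤ bcoef n j := by
  intro j
  have hn2 : (2:ℝ) ≤ (n:ℝ) := by exact_mod_cast hn
  cases j with
  | zero => norm_num [bcoef]
  | succ j =>
    have h0 : (0:ℝ) ≤ j := Nat.cast_nonneg j
    unfold bcoef
    apply div_nonneg <;> linarith

lemma lin_mul_Z (hn : 2 ≤ n) (x : EuclideanSpace ℝ (Fin n)) (j : ℕ) :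
    lin x * Z x j = acoef n j • Z x (j+1) + bcoef n j • (rad n * Z x (j-1)) := by
  have hn2 : (2:ℝ) ≤ (n:ℝ) := by exact_mod_cast hn
  cases j with
  | zero =>
    rw [show Z x 0 = (1 : P n) from rfl, show Z x 1 = lin x from rfl]
    norm_num [acoef, bcoef]
  | succ m =>
    have h0 : (0:ℝ) ≤ m := Nat.cast_nonneg m
    have hc : (2 * ((m:ℝ) + 2) + n - 4) ≠ 0 := by intro h; nlinarith
    have hd : (2 * ((m:ℝ) + 1) + n - 2) ≠ 0 := by intro h; nlinarith
    have h := Z_rec hn x m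
    have hB : (2 * ((m:ℝ) + 2) + n - 4) • (lin x * Z x (m+1))
        = (((m:ℝ) + 2) + n - 3) • Z x (m+2) + ((m:ℝ)+1) • (rad n * Z x m) :=
      sub_eq_iff_eq_add.mp h.symm
    have hL : lin x * Z x (m+1)
        = (2 * ((m:ℝ) + 2) + n - 4)⁻¹ • ((((m:ℝ) + 2) + n - 3) • Z x (m+2)
            + ((m:ℝ)+1) • (rad n * Z x m)) := by
      rw [← hB, inv_smul_smul₀ hc]
    rw [hL, show m + 1 - 1 = m from rfl, show m + 1 + 1 = m + 2 by omega]
    unfold acoef bcoef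
    match_scalars
    all_goals (field_simp; try ring)
    all_goals tauto

lemma decomp (hn : 2 ≤ n) : ∀ k : ℕ, ∃ μ : ℕ → ℝ, 0 < μ 0 ∧ (∀ m, 0 ≤ μ m)
    ∧ (∀ m, k < 2*m → μ m = 0)
    ∧ ∀ x : EuclideanSpace ℝ (Fin n),
        lin x ^ k = ∑ m ∈ Finset.range (k+1), μ m • ((rad n) ^ m * Z x (k - 2*m)) := by
  intro k
  induction k with
  | zero =>
    refine ⟨fun m => if m = 0 then 1 else 0, by norm_num, ?_, ?_, ?_⟩
    · intro m; by_cases h : m = 0 <;> simp [h]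
    · intro m hm
      have h : m ≠ 0 := by omega
      simp [h]
    · intro x
      simp [Z]
  | succ k ih =>
    obtain ⟨μ, hμ0, hμnn, hμvan, hid⟩ := ih
    refine ⟨fun m => match m with
      | 0 => μ 0 * acoef n k
      | (m+1) => μ (m+1) * acoef n (k - 2*(m+1)) + μ m * bcoef n (k - 2*m), ?_, ?_, ?_, ?_⟩
    · exact mul_pos hμ0 (acoef_pos hn k)
    · intro m
      cases m with
      | zero => exact le_of_lt (mul_pos hμ0 (acoef_pos hn k))
      | succ m =>
        exact add_nonneg (mul_nonneg (hμnn _) (le_of_lt (acoef_pos hn _)))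
          (mul_nonneg (hμnn _) (bcoef_nonneg hn _))
    · intro m hm
      cases m with
      | zero => exact absurd hm (by omega)
      | succ m =>
        have h1 : μ (m+1) = 0 := hμvan _ (by omega)
        dsimp only
        by_cases h2 : k < 2*m
        · rw [h1, hμvan _ h2]; ring
        · have h3 : k = 2*m := by omega
          rw [h1, h3]
          simp [bcoef]
    · intro x
      have hsplit : ∀ m ∈ Finset.range (k+1+1),
          (fun m => match m with
            | 0 => μ 0 * acoef n k
            | (m+1) => μ (m+1) * acoef n (k - 2*(m+1)) + μ m * bcoef n (k - 2*m)) m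
            • ((rad n) ^ m * Z x (k+1 - 2*m))
          = (μ m * acoef n (k - 2*m)) • ((rad n) ^ m * Z x (k+1 - 2*m))
            + (match m with | 0 => (0:ℝ) | (m+1) => μ m * bcoef n (k-2*m))
              • ((rad n) ^ m * Z x (k+1 - 2*m)) := by
        intro m _
        cases m with
        | zero => dsimp only; simp
        | succ m => dsimp only; rw [add_smul]
      rw [Finset.sum_congr rfl hsplit, Finset.sum_add_distrib]
      have step1 : ∀ m ∈ Finset.range (k+1), lin x * (μ m • (rad n ^ m * Z x (k - 2*m)))
          = (μ m * acoef n (k-2*m)) • (rad n ^ m * Z x ((k - 2*m)+1))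
            + (μ m * bcoef n (k-2*m)) • (rad n ^ (m+1) * Z x (k - 2*m - 1)) := by
        intro m _
        calc lin x * (μ m • (rad n ^ m * Z x (k - 2*m)))
            = μ m • (rad n ^ m * (lin x * Z x (k - 2*m))) := by
              simp only [smul_mul_assoc, mul_smul_comm, smul_smul]
              ring_nf
              try module
          _ = μ m • (rad n ^ m * (acoef n (k-2*m) • Z x ((k-2*m)+1)
                + bcoef n (k-2*m) • (rad n * Z x (k-2*m-1)))) := by rw [lin_mul_Z hn x (k-2*m)]
          _ = _ := by
              simp only [smul_mul_assoc, mul_smul_comm, smul_smul, mul_add, pow_succ, smul_add]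
              ring_nf
              try module
      rw [pow_succ', hid x, Finset.mul_sum, Finset.sum_congr rfl step1, Finset.sum_add_distrib]
      congr 1
      · conv_rhs => rw [Finset.sum_range_succ]
        rw [hμvan (k+1) (by omega), zero_mul, zero_smul, add_zero]
        refine Finset.sum_congr rfl ?_
        intro m hm
        by_cases h2 : 2*m ≤ k
        · rw [show k + 1 - 2*m = (k - 2*m) + 1 by omega]
        · rw [hμvan m (by omega), zero_mul, zero_smul, zero_smul]
      · conv_rhs => rw [Finset.sum_range_succ']
        dsimp only
        rw [zero_smul, add_zero]
        refine Finset.sum_congr rfl ?_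
        intro m _
        rw [show k + 1 - 2*(m+1) = k - 2*m - 1 by omega]

lemma inner_eq (x y : EuclideanSpace ℝ (Fin n)) : (inner ℝ x y : ℝ) = ∑ i, x i * y i := by
  rw [PiLp.inner_apply]
  exact Finset.sum_congr rfl fun i _ => by rw [RCLike.inner_apply, starRingEnd_apply, star_trivial, mul_comm]

lemma gegen_sum_nonneg (hn : 2 ≤ n) (k : ℕ) {N : ℕ} (ξ : Fin N → EuclideanSpace ℝ (Fin n))
    (hξ : ∀ i, ‖ξ i‖ = 1) :
    0 ≤ ∑ i, ∑ j, gegenbauer n k ((inner ℝ (ξ i) (ξ j) : ℝ)) := by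
  obtain ⟨μ, hμ0, hμnn, hμvan, hid⟩ := decomp hn k
  set p : P n := ∑ i, Z (ξ i) k with hp
  have hphom : p.IsHomogeneous k :=
    IsHomogeneous.sum _ _ _ fun i _ => Z_isHomogeneous (ξ i) k
  have hlapp : lap p = 0 := by
    rw [hp, lap_sum]
    exact Finset.sum_eq_zero fun i _ => lap_Z hn (hξ i) k
  have hS : ∑ i, ∑ j, gegenbauer n k ((inner ℝ (ξ i) (ξ j) : ℝ))
      = ∑ j, eval (fun t => ξ j t) p := by
    rw [Finset.sum_comm]
    refine Finset.sum_congr rfl fun j _ => ?_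
    rw [hp, map_sum]
    refine Finset.sum_congr rfl fun i _ => ?_
    rw [inner_eq (ξ i) (ξ j), ← Z_eval hn (ξ i) (ξ j) (hξ j) k]
  have hfP : ∀ j, eval (fun t => ξ j t) p = (k.factorial : ℝ)⁻¹ * fischer p (lin (ξ j) ^ k) := by
    intro j
    rw [fischer_lin_pow k p hphom (ξ j)]
    have : (k.factorial : ℝ) ≠ 0 := by positivity
    field_simp
  rw [hS, Finset.sum_congr rfl fun j _ => hfP j, ← Finset.mul_sum, ← fischer_sum_right]
  have hsum : ∑ j, lin (ξ j) ^ k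
      = ∑ j, ∑ m ∈ Finset.range (k+1), μ m • ((rad n)^m * Z (ξ j) (k - 2*m)) :=
    Finset.sum_congr rfl fun j _ => hid (ξ j)
  rw [hsum, fischer_sum_right]
  have hterm : ∀ j, fischer p (∑ m ∈ Finset.range (k+1), μ m • ((rad n)^m * Z (ξ j) (k-2*m)))
      = μ 0 * fischer p (Z (ξ j) k) := by
    intro j
    rw [fischer_sum_right, Finset.sum_eq_single 0]
    · rw [fischer_smul_right]
      norm_num
    · intro m _ hm
      obtain ⟨m', rfl⟩ : ∃ m', m = m' + 1 := ⟨m - 1, by omega⟩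
      rw [fischer_smul_right, pow_succ', mul_assoc, fischer_rad_mul_right, hlapp,
        fischer_zero_left, mul_zero]
    · intro h
      exact absurd (Finset.mem_range.mpr (by omega)) h
  rw [Finset.sum_congr rfl fun j _ => hterm j, ← Finset.mul_sum, ← fischer_sum_right, ← hp]
  have h1 : (0:ℝ) ≤ (k.factorial : ℝ)⁻¹ := by positivity
  exact mul_nonneg h1 (mul_nonneg hμ0.le (fischer_self_nonneg p))

lemma gegenbauer_one (hn : 2 ≤ n) : ∀ k, gegenbauer n k 1 = 1 := by
  refine Nat.twoStepInduction rfl rfl ?_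
  intro k ih1 ih2
  show ((2 * ((k : ℝ) + 2) + n - 4) * 1 * gegenbauer n (k + 1) 1
      - ((k : ℝ) + 1) * gegenbauer n k 1) / (((k : ℝ) + 2) + n - 3) = 1
  rw [ih1, ih2, div_eq_one_iff_eq (ne_of_gt (denom_pos hn k))]
  ring

end DGS

/-- **Delsarte–Goethals–Seidel linear programming bound**: if
`f = Σ_{k=0}^d c_k G_k^{(n)}` with all `c_k ≥ 0`, `c_0 > 0`, and `f ≤ 0` on
`[-1, cos ψ]`, then any spherical `ψ`-code `ξ₁, …, ξ_N ⊆ S^{n-1}` satisfies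
`N ≤ f(1)/c₀`. -/
theorem delsarte_goethals_seidel_bound
    (n : ℕ) (hn : 2 ≤ n) (ψ : ℝ) (hψ : ψ ∈ Set.Icc 0 Real.pi)
    (d : ℕ) (c : ℕ → ℝ) (hc : ∀ k ≤ d, 0 ≤ c k) (hc0 : 0 < c 0)
    (f : ℝ → ℝ) (hf : ∀ t, f t = ∑ k ∈ range (d + 1), c k * gegenbauer n k t)
    (hneg : ∀ t ∈ Set.Icc (-1 : ℝ) (Real.cos ψ), f t ≤ 0)
    (N : ℕ) (ξ : Fin N → EuclideanSpace ℝ (Fin n)) (hξ : ∀ i, ‖ξ i‖ = 1)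
    (hcode : ∀ i j, i ≠ j → (inner ℝ (ξ i) (ξ j) : ℝ) ≤ Real.cos ψ) :
    (N : ℝ) ≤ f 1 / c 0 := by
  classical
  have hf1 : 0 ≤ f 1 := by
    rw [hf 1]
    refine Finset.sum_nonneg fun k hk => ?_
    rw [DGS.gegenbauer_one hn k, mul_one]
    exact hc k (Nat.lt_succ_iff.mp (Finset.mem_range.mp hk))
  by_cases hN : N = 0
  · subst hN
    simp only [Nat.cast_zero]
    exact div_nonneg hf1 hc0.le
  -- lower bound
  have hA : c 0 * (N:ℝ)^2 ≤ ∑ i, ∑ j, f ((inner ℝ (ξ i) (ξ j) : ℝ)) := by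
    have hexp : ∑ i, ∑ j, f ((inner ℝ (ξ i) (ξ j) : ℝ))
        = ∑ k ∈ Finset.range (d+1),
            c k * ∑ i, ∑ j, gegenbauer n k ((inner ℝ (ξ i) (ξ j) : ℝ)) := by
      have h1 : ∀ i : Fin N, ∑ j, f ((inner ℝ (ξ i) (ξ j) : ℝ))
          = ∑ k ∈ Finset.range (d+1),
              c k * ∑ j, gegenbauer n k ((inner ℝ (ξ i) (ξ j) : ℝ)) := by
        intro i
        rw [show (∑ j, f ((inner ℝ (ξ i) (ξ j) : ℝ)))
            = ∑ j, ∑ k ∈ Finset.range (d+1), c k * gegenbauer n k ((inner ℝ (ξ i) (ξ j) : ℝ))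
          from Finset.sum_congr rfl fun j _ => hf _]
        rw [Finset.sum_comm]
        exact Finset.sum_congr rfl fun k _ => (Finset.mul_sum _ _ _).symm
      rw [Finset.sum_congr rfl fun i _ => h1 i, Finset.sum_comm]
      exact Finset.sum_congr rfl fun k _ => by rw [Finset.mul_sum]
    rw [hexp]
    have hzero : c 0 * ∑ i : Fin N, ∑ j : Fin N, gegenbauer n 0 ((inner ℝ (ξ i) (ξ j) : ℝ))
        = c 0 * (N:ℝ)^2 := by
      have hG0 : ∀ t : ℝ, gegenbauer n 0 t = 1 := fun _ => rfl
      simp only [hG0, Finset.sum_const, Finset.card_univ, Fintype.card_fin, nsmul_eq_mul,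
        mul_one]
      ring
    rw [← hzero]
    refine Finset.single_le_sum (f := fun k =>
      c k * ∑ i, ∑ j, gegenbauer n k ((inner ℝ (ξ i) (ξ j) : ℝ))) ?_ ?_
    · intro k hk
      exact mul_nonneg (hc k (Nat.lt_succ_iff.mp (Finset.mem_range.mp hk)))
        (DGS.gegen_sum_nonneg hn k ξ hξ)
    · exact Finset.mem_range.mpr (by omega)
  -- upper bound
  have hB : ∑ i, ∑ j, f ((inner ℝ (ξ i) (ξ j) : ℝ)) ≤ (N:ℝ) * f 1 := by
    have hrow : ∀ i : Fin N, ∑ j, f ((inner ℝ (ξ i) (ξ j) : ℝ)) ≤ f 1 := by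
      intro i
      rw [← Finset.add_sum_erase _ _ (Finset.mem_univ i)]
      have h1 : (inner ℝ (ξ i) (ξ i) : ℝ) = 1 := by
        rw [real_inner_self_eq_norm_mul_norm, hξ i]
        norm_num
      have h2 : ∑ j ∈ Finset.univ.erase i, f ((inner ℝ (ξ i) (ξ j) : ℝ)) ≤ 0 := by
        refine Finset.sum_nonpos fun j hj => ?_
        refine hneg _ ⟨?_, hcode i j (Ne.symm (Finset.mem_erase.mp hj).1)⟩
        have habs := abs_real_inner_le_norm (ξ i) (ξ j)
        rw [hξ i, hξ j, one_mul] at habs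
        linarith [neg_abs_le ((inner ℝ (ξ i) (ξ j) : ℝ))]
      rw [h1]
      linarith
    calc ∑ i, ∑ j, f ((inner ℝ (ξ i) (ξ j) : ℝ)) ≤ ∑ _i : Fin N, f 1 :=
          Finset.sum_le_sum fun i _ => hrow i
      _ = (N:ℝ) * f 1 := by
          rw [Finset.sum_const, Finset.card_univ, Fintype.card_fin, nsmul_eq_mul]
  have hN' : (0:ℝ) < N := by
    have := Nat.pos_of_ne_zero hN
    exact_mod_cast this
  have hcomb : c 0 * (N:ℝ)^2 ≤ (N:ℝ) * f 1 := le_trans hA hB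
  rw [le_div_iff₀ hc0]
  nlinarith [hcomb, hN']
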